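/- There is no nonzero real number c such that the function h_c(g) = −2c·(−1 + √(1 − g/c))/g (defined for g ≠ 0 near 0 with g/c < 1) satisfies h_c(g) = 1 − 4g + 36g^2 + o(g^2) as g → 0. Equivalently, for every nonzero real c the quantity (h_c(g) − (1 − 4g + 36g^2))/g^2 does not tend to 0 as g → 0. -/

import Mathlib

open Filter Topology

lemma ev_cond (c : ℝ) :
    ∀ᶠ g in 𝓝[≠] (0:ℝ), g ≠ 0 ∧ 0 < 1 - g / c := by
  have h1 : ∀ᶠ g in 𝓝[≠] (0:ℝ), g ≠ 0 := eventually_mem_nhdsWithin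
  have ht : Tendsto (fun g : ℝ => 1 - g / c) (𝓝 0) (𝓝 1) := by
    have hcont : Continuous fun g : ℝ => 1 - g / c := by continuity
    simpa using hcont.tendsto 0
  have h2 : ∀ᶠ g in 𝓝 (0:ℝ), 0 < 1 - g / c :=
    ht.eventually (eventually_gt_nhds (by norm_num))
  exact h1.and (h2.filter_mono nhdsWithin_le_nhds)

lemma sqrt_tend (c : ℝ) :
    Tendsto (fun g : ℝ => Real.sqrt (1 - g / c)) (𝓝 0) (𝓝 1) := by
  have hcont : Continuous fun g : ℝ => Real.sqrt (1 - g / c) := by continuity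
  simpa using hcont.tendsto 0

-- (h g - 1)/g → 1/(4c)
lemma lim1 (c : ℝ) (hc : c ≠ 0) :
    Tendsto (fun g : ℝ => (-2 * c * (-1 + Real.sqrt (1 - g / c)) / g - 1) / g)
      (𝓝[≠] 0) (𝓝 (1 / (4 * c))) := by
  have heq : ∀ᶠ g in 𝓝[≠] (0:ℝ),
      1 / (c * (1 + Real.sqrt (1 - g / c)) ^ 2)
        = (-2 * c * (-1 + Real.sqrt (1 - g / c)) / g - 1) / g := by
    filter_upwards [ev_cond c] with g ⟨hg, hpos⟩
    set s := Real.sqrt (1 - g / c) with hsdef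
    have hs2 : s ^ 2 = 1 - g / c := Real.sq_sqrt hpos.le
    have hs0 : 0 ≤ s := Real.sqrt_nonneg _
    have h1s : (1 + s) ≠ 0 := by positivity
    have hgc : g = c * (1 - s ^ 2) := by
      field_simp at hs2
      linarith
    have hne : c * (1 - s ^ 2) ≠ 0 := hgc ▸ hg
    have h1s2 : 1 - s ^ 2 ≠ 0 := right_ne_zero_of_mul hne
    rw [hgc]
    field_simp
    ring
  have htarget : Tendsto (fun g : ℝ => 1 / (c * (1 + Real.sqrt (1 - g / c)) ^ 2))
      (𝓝 0) (𝓝 (1 / (4 * c))) := by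
    have hmul : Tendsto (fun g : ℝ => c * (1 + Real.sqrt (1 - g / c)) ^ 2) (𝓝 0)
        (𝓝 (c * (1 + 1) ^ 2)) := (((sqrt_tend c).const_add 1).pow 2).const_mul c
    have h3 := hmul.inv₀ (by simpa using hc)
    have : c * (1+1)^2 = 4 * c := by ring
    rw [this] at h3
    simpa [one_div] using h3
  exact Tendsto.congr' heq (htarget.mono_left nhdsWithin_le_nhds)

/-- No choice of the constant c makes the square-root ansatz
h_c(g) = −2c(−1 + √(1 − g/c))/g consistent with the expansion
m₂ = 1 − 4g + 36g² + o(g²) at g = 0. -/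
theorem stmt_10 (c : ℝ) (hc : c ≠ 0) :
    ¬ Filter.Tendsto
      (fun g : ℝ =>
        ((-2 * c * (-1 + Real.sqrt (1 - g / c)) / g) -
          (1 - 4 * g + 36 * g ^ 2)) / g ^ 2)
      (𝓝[≠] 0) (𝓝 0) := by
  intro H
  have hlim2 : Tendsto (fun g : ℝ =>
      ((-2 * c * (-1 + Real.sqrt (1 - g / c)) / g) - (1 - 4 * g + 36 * g ^ 2)) / g)
      (𝓝[≠] 0) (𝓝 (1 / (4 * c) + 4)) := by
    have heq : ∀ᶠ g in 𝓝[≠] (0:ℝ),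
        (-2 * c * (-1 + Real.sqrt (1 - g / c)) / g - 1) / g + (4 - 36 * g)
          = ((-2 * c * (-1 + Real.sqrt (1 - g / c)) / g) - (1 - 4 * g + 36 * g ^ 2)) / g := by
      filter_upwards [ev_cond c] with g ⟨hg, _⟩
      field_simp
      ring
    have h36 : Tendsto (fun g : ℝ => (4 : ℝ) - 36 * g) (𝓝[≠] 0) (𝓝 4) := by
      have hcont : Continuous fun g : ℝ => (4:ℝ) - 36 * g := by continuity
      have := (hcont.tendsto 0).mono_left (nhdsWithin_le_nhds : 𝓝[≠] (0:ℝ) ≤ 𝓝 0)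
      simpa using this
    have := (lim1 c hc).add h36
    exact Tendsto.congr' heq this
  have hg0 : Tendsto (fun g : ℝ => g) (𝓝[≠] (0:ℝ)) (𝓝 0) :=
    tendsto_id.mono_left nhdsWithin_le_nhds
  have hprod : Tendsto (fun g : ℝ => g *
      (((-2 * c * (-1 + Real.sqrt (1 - g / c)) / g) - (1 - 4 * g + 36 * g ^ 2)) / g ^ 2))
      (𝓝[≠] 0) (𝓝 0) := by simpa using hg0.mul H
  have heq2 : ∀ᶠ g in 𝓝[≠] (0:ℝ),
      g * (((-2 * c * (-1 + Real.sqrt (1 - g / c)) / g) - (1 - 4 * g + 36 * g ^ 2)) / g ^ 2)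
        = ((-2 * c * (-1 + Real.sqrt (1 - g / c)) / g) - (1 - 4 * g + 36 * g ^ 2)) / g := by
    filter_upwards [ev_cond c] with g ⟨hg, _⟩
    field_simp
  have hprod' : Tendsto (fun g : ℝ =>
      ((-2 * c * (-1 + Real.sqrt (1 - g / c)) / g) - (1 - 4 * g + 36 * g ^ 2)) / g)
      (𝓝[≠] 0) (𝓝 0) := hprod.congr' heq2
  have huniq : 1 / (4 * c) + 4 = 0 := tendsto_nhds_unique hlim2 hprod'
  have hcv : c = -1/16 := by
    field_simp at huniq
    linarith
  subst hcv
  -- show the limit is -4, contradiction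
  have hs16 : Tendsto (fun g : ℝ => Real.sqrt (1 + 16 * g)) (𝓝 0) (𝓝 1) := by
    have hcont : Continuous fun g : ℝ => Real.sqrt (1 + 16 * g) := by continuity
    simpa using hcont.tendsto 0
  have hlimG : Tendsto (fun g : ℝ => 64 * (3 + Real.sqrt (1 + 16 * g)) /
      (1 + Real.sqrt (1 + 16 * g)) ^ 3 - 36) (𝓝 (0:ℝ)) (𝓝 (-4)) := by
    have hnum : Tendsto (fun g : ℝ => 64 * (3 + Real.sqrt (1 + 16 * g))) (𝓝 0)
        (𝓝 (64 * (3 + 1))) := (hs16.const_add 3).const_mul 64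
    have hden : Tendsto (fun g : ℝ => (1 + Real.sqrt (1 + 16 * g)) ^ 3) (𝓝 0)
        (𝓝 ((1 + 1) ^ 3)) := (hs16.const_add 1).pow 3
    have hdiv := (hnum.div hden (by norm_num)).sub_const 36
    have : 64 * (3 + 1) / (1 + 1 : ℝ) ^ 3 - 36 = -4 := by norm_num
    rwa [this] at hdiv
  have heq3 : ∀ᶠ g in 𝓝[≠] (0:ℝ),
      64 * (3 + Real.sqrt (1 + 16 * g)) / (1 + Real.sqrt (1 + 16 * g)) ^ 3 - 36
        = ((-2 * (-1/16 : ℝ) * (-1 + Real.sqrt (1 - g / (-1/16))) / g) -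
            (1 - 4 * g + 36 * g ^ 2)) / g ^ 2 := by
    filter_upwards [ev_cond (-1/16 : ℝ)] with g ⟨hg, hpos⟩
    have harg : 1 - g / (-1/16 : ℝ) = 1 + 16 * g := by ring
    rw [harg] at hpos ⊢
    set s := Real.sqrt (1 + 16 * g) with hsdef
    have hs2 : s ^ 2 = 1 + 16 * g := Real.sq_sqrt hpos.le
    have hs0 : 0 ≤ s := Real.sqrt_nonneg _
    have h1s : (1 + s) ≠ 0 := by positivity
    have hgc : g = (s ^ 2 - 1) / 16 := by linarith
    have hne : ((s ^ 2 - 1) / 16 : ℝ) ≠ 0 := hgc ▸ hg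
    rw [hgc]
    have hne' : s ^ 2 - 1 ≠ 0 := by
      intro h; exact hne (by rw [h]; norm_num)
    field_simp
    ring
  have hG : Tendsto (fun g : ℝ =>
      ((-2 * (-1/16 : ℝ) * (-1 + Real.sqrt (1 - g / (-1/16))) / g) -
        (1 - 4 * g + 36 * g ^ 2)) / g ^ 2) (𝓝[≠] 0) (𝓝 (-4)) :=
    Tendsto.congr' heq3 (hlimG.mono_left nhdsWithin_le_nhds)
  have hfin : (-4 : ℝ) = 0 := tendsto_nhds_unique hG H
  norm_num at hfin
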